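/- Let f, g : ℝ^n × ℝ^n → ℝ^n (resp. ℝ^{n×m}) satisfy the generalized Khasminskii condition: there exist K₁ > 0, K₂ ≥ 0 and β > 2 such that xᵀf(x,y) + ½|g(x,y)|² ≤ K₁(1+|x|²+|y|²) − K₂|x|^β + K₂|y|^β for all x,y. Let R ≥ 1 and define π(x) = (|x| ∧ R)·x/|x| (with π(0)=0), f_R(x,y) = f(π(x),π(y)), g_R(x,y) = g(π(x),π(y)). Then for all x,y ∈ ℝ^n: xᵀf_R(x,y) + ½|g_R(x,y)|² ≤ 2K₁(1+|x|²+|y|²) − K₂|π(x)|^β + K₂|π(y)|^β. -/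

import Mathlib

set_option maxHeartbeats 1600000


theorem stmt_0 {n m : ℕ}
    (f : EuclideanSpace ℝ (Fin n) → EuclideanSpace ℝ (Fin n) → EuclideanSpace ℝ (Fin n))
    (g : EuclideanSpace ℝ (Fin n) → EuclideanSpace ℝ (Fin n) → EuclideanSpace ℝ (Fin n × Fin m))
    (K₁ K₂ β : ℝ) (hK₁ : 0 < K₁) (hK₂ : 0 ≤ K₂) (hβ : 2 < β)
    (hKhas : ∀ x y : EuclideanSpace ℝ (Fin n),
      (inner ℝ (x) (f x y) : ℝ) + (1/2) * ‖g x y‖ ^ 2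
        ≤ K₁ * (1 + ‖x‖ ^ 2 + ‖y‖ ^ 2) - K₂ * ‖x‖ ^ β + K₂ * ‖y‖ ^ β)
    (R : ℝ) (hR : 1 ≤ R)
    (π : EuclideanSpace ℝ (Fin n) → EuclideanSpace ℝ (Fin n))
    (hπ : ∀ x, π x = (min ‖x‖ R / ‖x‖) • x) :
    ∀ x y : EuclideanSpace ℝ (Fin n),
      (inner ℝ (x) (f (π x) (π y)) : ℝ) + (1/2) * ‖g (π x) (π y)‖ ^ 2
        ≤ 2 * K₁ * (1 + ‖x‖ ^ 2 + ‖y‖ ^ 2) - K₂ * ‖π x‖ ^ β + K₂ * ‖π y‖ ^ β := by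
  have hRpos : (0:ℝ) < R := lt_of_lt_of_le one_pos hR
  have hπnorm : ∀ z, ‖π z‖ = min ‖z‖ R := by
    intro z
    rcases eq_or_ne z 0 with rfl | hz
    · simp [hπ, hRpos.le]
    · have hz' : 0 < ‖z‖ := norm_pos_iff.2 hz
      rw [hπ, norm_smul, Real.norm_eq_abs,
        abs_of_nonneg (div_nonneg (le_min (norm_nonneg z) hRpos.le) hz'.le),
        div_mul_cancel₀ _ hz'.ne']
  intro x y
  have hβ0 : (0:ℝ) ≤ β := by linarith
  have hpy : ‖π y‖ = min ‖y‖ R := hπnorm y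
  have hpyR : ‖π y‖ ≤ R := by rw [hpy]; exact min_le_right _ _
  have hpyy : ‖π y‖ ≤ ‖y‖ := by rw [hpy]; exact min_le_left _ _
  have hpy0 : 0 ≤ ‖π y‖ := norm_nonneg _
  by_cases hx : ‖x‖ ≤ R
  · -- π x = x
    have hπx : π x = x := by
      rcases eq_or_ne x 0 with rfl | hz
      · simp [hπ]
      · rw [hπ, min_eq_left hx, div_self (norm_pos_iff.2 hz).ne', one_smul]
    have key := hKhas x (π y)
    rw [hπx] at *
    have hxb : ‖x‖ ^ β = ‖x‖ ^ β := rfl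
    have hy2 : ‖π y‖ ^ 2 ≤ ‖y‖ ^ 2 := by
      exact pow_le_pow_left₀ hpy0 hpyy 2
    have hK1pos : 0 ≤ K₁ * (1 + ‖x‖ ^ 2 + ‖y‖ ^ 2) := by positivity
    nlinarith [key, mul_le_mul_of_nonneg_left hy2 hK₁.le]
  · push_neg at hx
    have hxpos : 0 < ‖x‖ := lt_trans hRpos hx
    have hπx : π x = (R / ‖x‖) • x := by rw [hπ, min_eq_right hx.le]
    have hpxR : ‖π x‖ = R := by rw [hπnorm, min_eq_right hx.le]
    set t : ℝ := ‖x‖ / R with ht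
    have ht1 : 1 ≤ t := (one_le_div hRpos).2 hx.le
    have ht0 : 0 ≤ t := le_trans zero_le_one ht1
    set I : ℝ := inner ℝ (π x) (f (π x) (π y)) with hI
    set G : ℝ := ‖g (π x) (π y)‖ ^ 2 with hG
    have hG0 : 0 ≤ G := by rw [hG]; positivity
    clear_value I G
    have hc : t * (R / ‖x‖) = 1 := by rw [ht]; field_simp
    have hinner : (inner ℝ (x) (f (π x) (π y)) : ℝ) = t * I := by
      rw [hI]
      nth_rewrite 2 [hπx]
      rw [real_inner_smul_left, ← mul_assoc, hc, one_mul]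
    have key := hKhas (π x) (π y)
    rw [← hI, ← hG, hpxR] at key
    have hQ : K₂ * ‖π y‖ ^ β - K₂ * R ^ β ≤ 0 := by
      have : ‖π y‖ ^ β ≤ R ^ β := Real.rpow_le_rpow hpy0 hpyR hβ0
      nlinarith
    have hQt : t * (K₂ * ‖π y‖ ^ β - K₂ * R ^ β) ≤ K₂ * ‖π y‖ ^ β - K₂ * R ^ β := by
      nlinarith [mul_nonneg (sub_nonneg.2 ht1) (neg_nonneg.2 hQ)]
    have e1 : t ≤ ‖x‖ := div_le_self (norm_nonneg x) hR
    have e2 : t * R ^ 2 = ‖x‖ * R := by rw [ht]; field_simp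
    have e3 : t * ‖π y‖ ^ 2 ≤ ‖x‖ * ‖π y‖ := by
      have h1 : ‖π y‖ ^ 2 ≤ R * ‖π y‖ := by nlinarith
      have h2 : t * ‖π y‖ ^ 2 ≤ t * (R * ‖π y‖) := mul_le_mul_of_nonneg_left h1 ht0
      have h3 : t * (R * ‖π y‖) = ‖x‖ * ‖π y‖ := by rw [ht]; field_simp
      linarith [h2, h3.le]
    have e4 : t * (1 + R ^ 2 + ‖π y‖ ^ 2) ≤ 2 * (1 + ‖x‖ ^ 2 + ‖y‖ ^ 2) := by
      have hab : ‖x‖ * ‖π y‖ ≤ ‖x‖ * ‖y‖ := mul_le_mul_of_nonneg_left hpyy (norm_nonneg x)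
      have haR : ‖x‖ * R ≤ ‖x‖ * ‖x‖ := mul_le_mul_of_nonneg_left hx.le hxpos.le
      have hexp : t * (1 + R ^ 2 + ‖π y‖ ^ 2) = t + t * R ^ 2 + t * ‖π y‖ ^ 2 := by ring
      have hsq : ‖x‖ * ‖x‖ = ‖x‖ ^ 2 := by ring
      have s1 : ‖x‖ ≤ (1 + ‖x‖ ^ 2) / 2 := by nlinarith [sq_nonneg (‖x‖ - 1)]
      have s2 : ‖x‖ * ‖y‖ ≤ (‖x‖ ^ 2 + ‖y‖ ^ 2) / 2 := by nlinarith [sq_nonneg (‖x‖ - ‖y‖)]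
      linarith [hexp.le, e1, e2.le, e3, haR, hab, hsq.le, hsq.ge, s1, s2, sq_nonneg ‖y‖]
    have e5 : t * (K₁ * (1 + R ^ 2 + ‖π y‖ ^ 2)) ≤ 2 * K₁ * (1 + ‖x‖ ^ 2 + ‖y‖ ^ 2) := by
      have h := mul_le_mul_of_nonneg_left e4 hK₁.le
      ring_nf at h ⊢
      linarith
    rw [hinner]
    have step1 : t * I + 1/2 * G ≤ t * (I + 1/2 * G) := by
      nlinarith [mul_nonneg (sub_nonneg.2 ht1) hG0]
    have step2 : t * (I + 1/2 * G) ≤ t * (K₁ * (1 + R ^ 2 + ‖π y‖ ^ 2)) +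
        t * (K₂ * ‖π y‖ ^ β - K₂ * R ^ β) := by
      have h := mul_le_mul_of_nonneg_left key ht0
      ring_nf at h ⊢
      linarith
    rw [hpxR]
    linarith
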